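/- arXiv:2605.18724 — 7 statements merged into one kernel-verified Lean document; each statement's English description precedes it below -/
import Mathlib

section
/- Let F0 and F1 be probability measures on a measurable space with F1 absolutely continuous with respect to F0, and suppose the Radon–Nikodym derivative dF1/dF0 is bounded above by a constant γ ≥ 1 (F0-almost everywhere). Then for every measurable set A, F1(A) − F0(A) ≤ (γ − 1)/γ. -/
open MeasureTheory

theorem set_diff_upper_bound
    {Ω : Type*} [MeasurableSpace Ω]
    (F0 F1 : Measure Ω) [IsProbabilityMeasure F0] [IsProbabilityMeasure F1]
    (γ : ℝ) (hγ : 1 ≤ γ)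
    (habs : F1 ≪ F0)
    (hbound : ∀ᵐ u ∂F0, F1.rnDeriv F0 u ≤ ENNReal.ofReal γ)
    (A : Set Ω) (hA : MeasurableSet A) :
    (F1 A).toReal - (F0 A).toReal ≤ (γ - 1) / γ := by
  have hγ0 : (0:ℝ) < γ := lt_of_lt_of_le one_pos hγ
  have hkey : F1 A ≤ ENNReal.ofReal γ * F0 A := by
    have h1 : F1 A = ∫⁻ x in A, F1.rnDeriv F0 x ∂F0 :=
      (Measure.setLIntegral_rnDeriv habs A).symm
    have h2 : ∫⁻ x in A, F1.rnDeriv F0 x ∂F0 ≤ ∫⁻ _ in A, ENNReal.ofReal γ ∂F0 :=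
      setLIntegral_mono_ae (by fun_prop) (hbound.mono fun x hx => fun _ => hx)
    rw [h1]
    simpa [lintegral_const, Measure.restrict_apply_univ] using h2
  have hb1 : (F0 A).toReal ≤ 1 := by
    have := prob_le_one (μ := F0) (s := A)
    simpa using ENNReal.toReal_mono (by simp) this
  have ha1 : (F1 A).toReal ≤ 1 := by
    have := prob_le_one (μ := F1) (s := A)
    simpa using ENNReal.toReal_mono (by simp) this
  have hb0 : 0 ≤ (F0 A).toReal := ENNReal.toReal_nonneg
  have hkr : (F1 A).toReal ≤ γ * (F0 A).toReal := by
    have := ENNReal.toReal_mono (by finiteness) hkey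
    rwa [ENNReal.toReal_mul, ENNReal.toReal_ofReal hγ0.le] at this
  rcases le_or_gt (1/γ) ((F0 A).toReal) with h | h
  · have : (F1 A).toReal - (F0 A).toReal ≤ 1 - 1/γ := by linarith
    calc (F1 A).toReal - (F0 A).toReal ≤ 1 - 1/γ := this
      _ = (γ - 1)/γ := by field_simp
  · have : (F1 A).toReal - (F0 A).toReal ≤ (γ - 1) * (F0 A).toReal := by linarith
    calc (F1 A).toReal - (F0 A).toReal ≤ (γ - 1) * (F0 A).toReal := this
      _ ≤ (γ - 1) * (1/γ) := by
          apply mul_le_mul_of_nonneg_left h.le (by linarith)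
      _ = (γ - 1)/γ := by ring
end

section
/- Let F0 and F1 be probability measures on a measurable space with F1 ≪ F0 and dF1/dF0 ≤ γ F0-almost everywhere for some γ ≥ 1. Then for every measurable set A, F0(A) − F1(A) ≤ (γ − 1)/γ. -/
open MeasureTheory

theorem set_diff_lower_bound
    {Ω : Type*} [MeasurableSpace Ω]
    (F0 F1 : Measure Ω) [IsProbabilityMeasure F0] [IsProbabilityMeasure F1]
    (γ : ℝ) (hγ : 1 ≤ γ)
    (habs : F1 ≪ F0)
    (hbound : ∀ᵐ u ∂F0, F1.rnDeriv F0 u ≤ ENNReal.ofReal γ)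
    (A : Set Ω) (hA : MeasurableSet A) :
    (F0 A).toReal - (F1 A).toReal ≤ (γ - 1) / γ := by
  have hγ0 : (0:ℝ) < γ := lt_of_lt_of_le one_pos hγ
  -- key bound: F1 S ≤ γ * F0 S for measurable S
  have key : ∀ S : Set Ω, MeasurableSet S → F1 S ≤ ENNReal.ofReal γ * F0 S := by
    intro S hS
    have h1 : F1 S = ∫⁻ x in S, F1.rnDeriv F0 x ∂F0 :=
      (Measure.setLIntegral_rnDeriv habs S).symm
    rw [h1]
    calc ∫⁻ x in S, F1.rnDeriv F0 x ∂F0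
        ≤ ∫⁻ _ in S, ENNReal.ofReal γ ∂F0 := by
          refine setLIntegral_mono_ae (by measurability) ?_
          filter_upwards [hbound] with u hu using fun _ => hu
      _ = ENNReal.ofReal γ * F0 S := by
          rw [setLIntegral_const]
  have hkc := key Aᶜ hA.compl
  -- convert to reals
  have hF0c : (F0 Aᶜ).toReal = 1 - (F0 A).toReal := by
    rw [measure_compl hA (measure_ne_top _ _), measure_univ]
    rw [ENNReal.toReal_sub_of_le (prob_le_one) (by simp)]
    simp
  have hF1c : (F1 Aᶜ).toReal = 1 - (F1 A).toReal := by
    rw [measure_compl hA (measure_ne_top _ _), measure_univ]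
    rw [ENNReal.toReal_sub_of_le (prob_le_one) (by simp)]
    simp
  have hkcR : (F1 Aᶜ).toReal ≤ γ * (F0 Aᶜ).toReal := by
    have := ENNReal.toReal_mono (by finiteness) hkc
    rwa [ENNReal.toReal_mul, ENNReal.toReal_ofReal hγ0.le] at this
  set x := (F0 A).toReal with hx
  set y := (F1 A).toReal with hy
  have hx1 : x ≤ 1 := by
    simpa [hx] using ENNReal.toReal_mono (by simp) (prob_le_one)
  have hy0 : 0 ≤ y := ENNReal.toReal_nonneg
  have hmain : x - y ≤ (γ - 1) * (1 - x) := by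
    rw [hF0c, hF1c] at hkcR
    nlinarith
  rcases le_or_gt x ((γ - 1) / γ) with h | h
  · linarith
  · have : (γ - 1) * (1 - x) ≤ (γ - 1) / γ := by
      have h1x : 1 - x ≤ 1/γ := by
        rw [div_lt_iff₀ hγ0] at h
        rw [le_div_iff₀ hγ0]
        nlinarith
      calc (γ - 1) * (1 - x) ≤ (γ - 1) * (1/γ) := by nlinarith
        _ = (γ - 1) / γ := by ring
    linarith
end

section
/- Let F0 and F1 be probability measures with F1 ≪ F0 and dF1/dF0 ≤ γ F0-a.e. for γ ≥ 1, and let r be a measurable function with values in [0,1]. Then |∫ r dF1 − ∫ r dF0| ≤ (γ − 1)/γ. -/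
open MeasureTheory

theorem integral_diff_bound_unit_function
    {Ω : Type*} [MeasurableSpace Ω]
    (F0 F1 : Measure Ω) [IsProbabilityMeasure F0] [IsProbabilityMeasure F1]
    (γ : ℝ) (hγ : 1 ≤ γ)
    (habs : F1 ≪ F0)
    (hbound : ∀ᵐ u ∂F0, F1.rnDeriv F0 u ≤ ENNReal.ofReal γ)
    (r : Ω → ℝ) (hr : Measurable r) (hr01 : ∀ ω, r ω ∈ Set.Icc (0:ℝ) 1) :
    |∫ ω, r ω ∂F1 - ∫ ω, r ω ∂F0| ≤ (γ - 1) / γ := by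
  have hγ0 : (0:ℝ) < γ := lt_of_lt_of_le one_pos hγ
  set f : Ω → ℝ := fun ω => (F1.rnDeriv F0 ω).toReal with hf
  have hfmeas : Measurable f := (Measure.measurable_rnDeriv F1 F0).ennreal_toReal
  set A : Set Ω := {ω | 1 ≤ f ω} with hA
  have hAmeas : MeasurableSet A := measurableSet_le measurable_const hfmeas
  set p : ℝ := (F0 A).toReal with hp
  set q : ℝ := (F1 A).toReal with hq
  have hp0 : 0 ≤ p := ENNReal.toReal_nonneg
  have hrbd : ∀ ω, ‖r ω‖ ≤ 1 := fun ω => by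
    rw [Real.norm_eq_abs, abs_le]
    exact ⟨le_trans (by norm_num) (hr01 ω).1, (hr01 ω).2⟩
  have hp1 : p ≤ 1 := by
    rw [hp]
    exact ENNReal.toReal_le_of_le_ofReal one_pos.le (by simpa using prob_le_one (μ := F0) (s := A))
  have hq1 : q ≤ 1 := by
    rw [hq]
    exact ENNReal.toReal_le_of_le_ofReal one_pos.le (by simpa using prob_le_one (μ := F1) (s := A))
  -- q ≤ γ p
  have hqγp : q ≤ γ * p := by
    have h1 : F1 A = ∫⁻ ω in A, F1.rnDeriv F0 ω ∂F0 := (Measure.setLIntegral_rnDeriv habs A).symm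
    have h2 : ∫⁻ ω in A, F1.rnDeriv F0 ω ∂F0 ≤ ∫⁻ _ in A, ENNReal.ofReal γ ∂F0 :=
      setLIntegral_mono_ae (aemeasurable_const) (hbound.mono fun ω h _ => h)
    have h3 : (∫⁻ _ in A, ENNReal.ofReal γ ∂F0) = ENNReal.ofReal γ * F0 A :=
      setLIntegral_const A _
    have h4 : F1 A ≤ ENNReal.ofReal γ * F0 A := h1 ▸ (h2.trans_eq h3)
    calc q ≤ (ENNReal.ofReal γ * F0 A).toReal :=
            ENNReal.toReal_mono (ENNReal.mul_ne_top ENNReal.ofReal_ne_top (measure_ne_top F0 A)) h4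
      _ = γ * p := by
            rw [ENNReal.toReal_mul, ENNReal.toReal_ofReal hγ0.le, hp]
  -- integral identities
  have hfint : Integrable f F0 := Measure.integrable_toReal_rnDeriv
  have hrint : ∀ (μ : Measure Ω) [IsProbabilityMeasure μ], Integrable r μ := by
    intro μ _
    refine (integrable_const (1:ℝ)).mono' hr.aestronglyMeasurable ?_
    filter_upwards with ω
    exact hrbd ω
  have hF1eq : ∫ ω, r ω ∂F1 = ∫ ω, f ω * r ω ∂F0 := by
    rw [← integral_rnDeriv_smul habs]
    simp [hf, smul_eq_mul]
  have hqS : ∫ ω in A, f ω ∂F0 = q := Measure.setIntegral_toReal_rnDeriv habs A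
  have htot : ∫ ω, f ω ∂F0 = 1 := by
    rw [hf, Measure.integral_toReal_rnDeriv habs]; simp
  have hgint : Integrable (fun ω => r ω * (f ω - 1)) F0 :=
    Integrable.bdd_mul (hfint.sub (integrable_const 1)) hr.aestronglyMeasurable (Filter.Eventually.of_forall hrbd)
  have hindint : Integrable (A.indicator (fun ω => f ω - 1)) F0 :=
    (hfint.sub (integrable_const 1)).indicator hAmeas
  have hindint' : Integrable (Aᶜ.indicator (fun ω => 1 - f ω)) F0 :=
    ((integrable_const 1).sub hfint).indicator hAmeas.compl
  have hindval : ∫ ω, A.indicator (fun ω => f ω - 1) ω ∂F0 = q - p := by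
    rw [integral_indicator hAmeas, integral_sub (hfint.integrableOn) (integrable_const 1).integrableOn,
      hqS]
    simp [hp, Measure.real]
  have hindval' : ∫ ω, Aᶜ.indicator (fun ω => 1 - f ω) ω ∂F0 = q - p := by
    rw [integral_indicator hAmeas.compl,
      integral_sub (integrable_const 1).integrableOn (hfint.integrableOn)]
    have hAc : ∫ ω in Aᶜ, f ω ∂F0 = 1 - q := by
      have := integral_add_compl hAmeas hfint
      rw [hqS, htot] at this
      linarith
    have hmeasc : (F0 Aᶜ).toReal = 1 - p := by
      have := measure_add_measure_compl (μ := F0) hAmeas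
      have h0 : F0 A + F0 Aᶜ = 1 := by simpa using this
      have : (F0 A).toReal + (F0 Aᶜ).toReal = 1 := by
        rw [← ENNReal.toReal_add (measure_ne_top _ _) (measure_ne_top _ _), h0]; simp
      linarith [this]
    simp only [MeasureTheory.integral_const, smul_eq_mul, mul_one, Measure.real, Measure.restrict_apply_univ]
    rw [hAc, hmeasc]
    ring
  -- diff = ∫ r (f-1)
  have hfrint : Integrable (fun ω => f ω * r ω) F0 := by
    have := Integrable.bdd_mul hfint hr.aestronglyMeasurable (Filter.Eventually.of_forall hrbd)
    simpa [mul_comm] using this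
  have hdiff : ∫ ω, r ω ∂F1 - ∫ ω, r ω ∂F0 = ∫ ω, r ω * (f ω - 1) ∂F0 := by
    rw [hF1eq, ← integral_sub hfrint (hrint F0)]
    congr 1; ext ω; ring
  have hub : ∫ ω, r ω * (f ω - 1) ∂F0 ≤ q - p := by
    rw [← hindval]
    refine integral_mono hgint hindint fun ω => ?_
    by_cases hω : ω ∈ A
    · rw [Set.indicator_of_mem hω]
      have h1 : 0 ≤ f ω - 1 := by simpa [hA] using hω
      nlinarith [(hr01 ω).1, (hr01 ω).2]
    · rw [Set.indicator_of_notMem hω]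
      have h1 : f ω - 1 ≤ 0 := by
        have : ¬ (1 ≤ f ω) := hω
        linarith [lt_of_not_ge this]
      nlinarith [(hr01 ω).1, (hr01 ω).2]
  have hlb : -(q - p) ≤ ∫ ω, r ω * (f ω - 1) ∂F0 := by
    rw [← hindval']
    have : ∫ ω, -(r ω * (f ω - 1)) ∂F0 ≤ ∫ ω, Aᶜ.indicator (fun ω => 1 - f ω) ω ∂F0 := by
      refine integral_mono hgint.neg hindint' fun ω => ?_
      by_cases hω : ω ∈ A
      · rw [Set.indicator_of_notMem (by simpa using hω)]
        have h1 : 0 ≤ f ω - 1 := by simpa [hA] using hω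
        nlinarith [(hr01 ω).1, (hr01 ω).2]
      · rw [Set.indicator_of_mem (by simpa using hω)]
        have : ¬ (1 ≤ f ω) := hω
        have h1 : f ω - 1 ≤ 0 := by linarith [lt_of_not_ge this]
        nlinarith [(hr01 ω).1, (hr01 ω).2]
    rw [integral_neg] at this
    linarith
  have habs' : |∫ ω, r ω ∂F1 - ∫ ω, r ω ∂F0| ≤ q - p := by
    rw [hdiff, abs_le]
    exact ⟨by linarith, hub⟩
  refine habs'.trans ?_
  -- min argument
  by_cases hcase : p ≤ 1 / γ
  · have h1 : q - p ≤ (γ - 1) * p := by linarith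
    have h2 : (γ - 1) * p ≤ (γ - 1) * (1 / γ) :=
      mul_le_mul_of_nonneg_left hcase (by linarith)
    calc q - p ≤ (γ - 1) * (1 / γ) := h1.trans h2
      _ = (γ - 1) / γ := by ring
  · push_neg at hcase
    have : q - p ≤ 1 - p := by linarith
    have h2 : 1 - p ≤ 1 - 1 / γ := by linarith
    calc q - p ≤ 1 - 1 / γ := by linarith
      _ = (γ - 1) / γ := by field_simp
end

section
/- Let F0 and F1 be probability measures with F1 ≪ F0 and dF1/dF0 ≤ γ F0-a.e. for γ ≥ 1, and let ψ be a bounded measurable function with sup ψ − inf ψ = η. Then |∫ ψ dF1 − ∫ ψ dF0| ≤ η(γ − 1)/γ. -/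
open MeasureTheory

theorem sharp_additive_bridge_bound
    {Ω : Type*} [MeasurableSpace Ω] [Nonempty Ω]
    (F0 F1 : Measure Ω) [IsProbabilityMeasure F0] [IsProbabilityMeasure F1]
    (γ : ℝ) (hγ : 1 ≤ γ)
    (habs : F1 ≪ F0)
    (hbound : ∀ᵐ u ∂F0, F1.rnDeriv F0 u ≤ ENNReal.ofReal γ)
    (ψ : Ω → ℝ) (hψ : Measurable ψ)
    (hbdd : BddAbove (Set.range ψ)) (hbdd' : BddBelow (Set.range ψ))
    (η : ℝ) (hη : sSup (Set.range ψ) - sInf (Set.range ψ) = η) :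
    |∫ ω, ψ ω ∂F1 - ∫ ω, ψ ω ∂F0| ≤ η * (γ - 1) / γ := by
  have hγ0 : (0:ℝ) < γ := lt_of_lt_of_le one_pos hγ
  set f : Ω → ℝ := fun ω => (F1.rnDeriv F0 ω).toReal with hf_def
  have hf_meas : Measurable f := (Measure.measurable_rnDeriv F1 F0).ennreal_toReal
  have hf_int : Integrable f F0 := Measure.integrable_toReal_rnDeriv
  have hf_nonneg : ∀ ω, 0 ≤ f ω := fun ω => ENNReal.toReal_nonneg
  have hf_le : ∀ᵐ ω ∂F0, f ω ≤ γ := by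
    filter_upwards [hbound] with ω h
    exact ENNReal.toReal_le_of_le_ofReal hγ0.le h
  have hf_integral : ∫ ω, f ω ∂F0 = 1 := by
    rw [Measure.integral_toReal_rnDeriv habs]; simp
  set m := sInf (Set.range ψ) with hm_def
  set M := sSup (Set.range ψ) with hM_def
  have hmψ : ∀ ω, m ≤ ψ ω := fun ω => csInf_le hbdd' (Set.mem_range_self ω)
  have hψM : ∀ ω, ψ ω ≤ M := fun ω => le_csSup hbdd (Set.mem_range_self ω)
  have hψη : ∀ ω, ψ ω - m ≤ η := by
    intro ω; rw [← hη]; have := hψM ω; linarith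
  have hη0 : 0 ≤ η := by
    rw [← hη]
    obtain ⟨ω⟩ := ‹Nonempty Ω›
    have := hmψ ω; have := hψM ω; linarith
  -- φ = ψ - m : nonnegative, ≤ η
  set φ : Ω → ℝ := fun ω => ψ ω - m with hφ_def
  have hφ_meas : Measurable φ := hψ.sub measurable_const
  have hφ0 : ∀ ω, 0 ≤ φ ω := fun ω => sub_nonneg.2 (hmψ ω)
  have hφη : ∀ ω, φ ω ≤ η := hψη
  have hφ_norm : ∀ ω, ‖φ ω‖ ≤ η := by
    intro ω; rw [Real.norm_eq_abs, abs_of_nonneg (hφ0 ω)]; exact hφη ω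
  have hφ_int : ∀ (μ : Measure Ω) [IsProbabilityMeasure μ], Integrable φ μ := by
    intro μ _
    exact (integrable_const η).mono' hφ_meas.aestronglyMeasurable
      (Filter.Eventually.of_forall fun ω => by
        simpa [Real.norm_eq_abs] using hφ_norm ω)
  have hφ_eq : ∀ (μ : Measure Ω) [IsProbabilityMeasure μ],
      ∫ ω, φ ω ∂μ = ∫ ω, ψ ω ∂μ - m := by
    intro μ _
    have hψ_int : Integrable ψ μ := by
      have : ψ = fun ω => φ ω + m := by funext ω; simp [hφ_def]
      rw [this]; exact (hφ_int μ).add (integrable_const m)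
    rw [hφ_def]
    rw [integral_sub hψ_int (integrable_const m)]
    simp
  -- change of measure
  have hfφ_int : Integrable (fun ω => f ω * φ ω) F0 := by
    have := (hf_int.bdd_mul hφ_meas.aestronglyMeasurable (Filter.Eventually.of_forall hφ_norm))
    exact this.congr (Filter.Eventually.of_forall fun ω => mul_comm _ _)
  have hkey : ∫ ω, f ω * φ ω ∂F0 = ∫ ω, φ ω ∂F1 := by
    rw [← MeasureTheory.integral_rnDeriv_smul habs (f := φ)]
    rfl
  -- g = (f-1) * φ and D = ∫ g
  set g : Ω → ℝ := fun ω => (f ω - 1) * φ ω with hg_def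
  have hg_eq : g = fun ω => f ω * φ ω - φ ω := by
    funext ω; simp [hg_def]; ring
  have hg_int : Integrable g F0 := by
    rw [hg_eq]; exact hfφ_int.sub (hφ_int F0)
  have hD : ∫ ω, ψ ω ∂F1 - ∫ ω, ψ ω ∂F0 = ∫ ω, g ω ∂F0 := by
    rw [hg_eq, integral_sub hfφ_int (hφ_int F0), hkey, hφ_eq F1, hφ_eq F0]
    ring
  -- positive parts
  set p : Ω → ℝ := fun ω => max (f ω - 1) 0 with hp_def
  set q : Ω → ℝ := fun ω => max (1 - f ω) 0 with hq_def
  have hp_int : Integrable p F0 := (hf_int.sub (integrable_const 1)).pos_part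
  have hq_int : Integrable q F0 := ((integrable_const 1).sub hf_int).pos_part
  set T : ℝ := ∫ ω, p ω ∂F0 with hT_def
  have hTq : ∫ ω, q ω ∂F0 = T := by
    have h : ∫ ω, (p ω - q ω) ∂F0 = 0 := by
      have : (fun ω => p ω - q ω) = fun ω => f ω - 1 := by
        funext ω
        rcases le_total (f ω) 1 with h | h
        · simp [hp_def, hq_def, max_eq_right (sub_nonpos.2 h),
            max_eq_left (sub_nonneg.2 h)]
        · simp [hp_def, hq_def, max_eq_left (sub_nonneg.2 h),
            max_eq_right (sub_nonpos.2 h)]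
      rw [this, integral_sub hf_int (integrable_const 1), hf_integral]
      simp
    rw [integral_sub hp_int hq_int] at h
    linarith
  -- |D| ≤ η * T
  have habs_le : |∫ ω, g ω ∂F0| ≤ η * T := by
    rw [abs_le]
    constructor
    · have h1 : ∀ ω, -(g ω) ≤ η * q ω := by
        intro ω
        show -((f ω - 1) * φ ω) ≤ η * q ω
        rcases le_total (f ω) 1 with h | h
        · have hq' : q ω = 1 - f ω := max_eq_left (sub_nonneg.2 h)
          rw [hq']
          have h2 : (1 - f ω) * φ ω ≤ (1 - f ω) * η :=
            mul_le_mul_of_nonneg_left (hφη ω) (sub_nonneg.2 h)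
          nlinarith
        · have hq' : q ω = 0 := max_eq_right (sub_nonpos.2 h)
          rw [hq']
          have := mul_nonneg (sub_nonneg.2 h) (hφ0 ω)
          nlinarith
      rw [neg_le]
      calc -∫ ω, g ω ∂F0 = ∫ ω, -(g ω) ∂F0 := by rw [integral_neg]
        _ ≤ ∫ ω, η * q ω ∂F0 := integral_mono hg_int.neg (hq_int.const_mul η) h1
        _ = η * T := by rw [integral_const_mul, hTq]
    · have h1 : ∀ ω, g ω ≤ η * p ω := by
        intro ω
        show (f ω - 1) * φ ω ≤ η * p ω
        rcases le_total (f ω) 1 with h | h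
        · have hp' : p ω = 0 := max_eq_right (sub_nonpos.2 h)
          rw [hp']
          have := mul_nonneg (sub_nonneg.2 h) (hφ0 ω)
          nlinarith
        · have hp' : p ω = f ω - 1 := max_eq_left (sub_nonneg.2 h)
          rw [hp']
          have h2 : (f ω - 1) * φ ω ≤ (f ω - 1) * η :=
            mul_le_mul_of_nonneg_left (hφη ω) (sub_nonneg.2 h)
          linarith [h2]
      have := integral_mono hg_int (hp_int.const_mul η) (fun ω => h1 ω)
      rw [integral_const_mul] at this
      exact this
  -- bound T ≤ (γ-1)/γ via the set A = {f > 1}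
  set A : Set Ω := {ω | 1 < f ω} with hA_def
  have hA : MeasurableSet A := measurableSet_lt measurable_const hf_meas
  set a : ℝ := (F0 A).toReal with ha_def
  have ha_compl : (F0 Aᶜ).toReal = 1 - a := by
    have hadd : (F0 A).toReal + (F0 Aᶜ).toReal = 1 := by
      rw [← ENNReal.toReal_add (measure_ne_top _ _) (measure_ne_top _ _),
        measure_add_measure_compl hA]
      simp
    linarith
  have hT1 : T ≤ (γ - 1) * a := by
    have hbnd : ∀ᵐ ω ∂F0, p ω ≤ A.indicator (fun _ => γ - 1) ω := by
      filter_upwards [hf_le] with ω h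
      by_cases hω : ω ∈ A
      · rw [Set.indicator_of_mem hω]
        have h1 : f ω - 1 ≤ γ - 1 := by linarith
        have h2 : (0:ℝ) ≤ γ - 1 := by linarith
        simp only [hp_def]
        exact max_le h1 h2
      · rw [Set.indicator_of_notMem hω]
        have hω' : f ω ≤ 1 := le_of_not_gt hω
        simp [hp_def, max_eq_right (sub_nonpos.2 hω')]
    have hind_int : Integrable (A.indicator fun _ => γ - 1) F0 :=
      (integrable_const (γ - 1)).indicator hA
    have := integral_mono_ae hp_int hind_int hbnd
    rwa [integral_indicator_const _ hA, smul_eq_mul, mul_comm] at this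
  have hT2 : T ≤ 1 - a := by
    have hbnd : ∀ᵐ ω ∂F0, q ω ≤ Aᶜ.indicator (fun _ => (1:ℝ)) ω := by
      filter_upwards with ω
      by_cases hω : ω ∈ A
      · rw [Set.indicator_of_notMem (by simpa using hω)]
        have hω' : 1 < f ω := hω
        simp [hq_def, max_eq_right (sub_nonpos.2 hω'.le)]
      · rw [Set.indicator_of_mem (by simpa using hω)]
        have hω' : f ω ≤ 1 := le_of_not_gt hω
        have h0 := hf_nonneg ω
        simp only [hq_def]
        exact max_le (by linarith) zero_le_one
    have hind_int : Integrable (Aᶜ.indicator fun _ => (1:ℝ)) F0 :=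
      (integrable_const 1).indicator hA.compl
    have := integral_mono_ae hq_int hind_int hbnd
    rw [integral_indicator_const _ hA.compl, smul_eq_mul, mul_one, measureReal_def, ha_compl] at this
    linarith [hTq ▸ this]
  have hT : T ≤ (γ - 1) / γ := by
    rw [le_div_iff₀ hγ0]
    nlinarith [hT1, hT2]
  have hT0 : 0 ≤ T := by
    apply integral_nonneg; intro ω; exact le_max_right _ _
  calc |∫ ω, ψ ω ∂F1 - ∫ ω, ψ ω ∂F0| = |∫ ω, g ω ∂F0| := by rw [hD]
    _ ≤ η * T := habs_le
    _ ≤ η * ((γ - 1) / γ) := mul_le_mul_of_nonneg_left hT hη0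
    _ = η * (γ - 1) / γ := by ring
end

section
/- Conditional Bayes balancing: let X take values in a finite set, let A = {x : g(x) = b} for a measurable function g and fixed b, and suppose the conditional probability P(M = m | X = x) is constant, equal to c > 0, for all x ∈ A. Then for all x ∈ A with P(X = x, g(X) = b) > 0, P(X = x | M = m, g(X) = b) = P(X = x | g(X) = b). -/
open MeasureTheory ProbabilityTheory

theorem discrete_balancing
    {Ω ι β : Type*} [MeasurableSpace Ω] [Fintype ι]
    [MeasurableSpace ι] [MeasurableSingletonClass ι]
    (P : Measure Ω) [IsProbabilityMeasure P]
    (X : Ω → ι) (hX : Measurable X)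
    (Mev : Set Ω) (hMev : MeasurableSet Mev)
    (g : ι → β) (b : β)
    (Bev : Set Ω) (hBev : Bev = X ⁻¹' {x | g x = b})
    (hBpos : P Bev ≠ 0) (hMBpos : P (Mev ∩ Bev) ≠ 0)
    (c : ℝ) (hc : 0 < c)
    (hbal : ∀ x, g x = b → (P[|X ⁻¹' {x}]) Mev = ENNReal.ofReal c) :
    ∀ x, g x = b → P (X ⁻¹' {x}) ≠ 0 →
      (P[|Mev ∩ Bev]) (X ⁻¹' {x}) = (P[|Bev]) (X ⁻¹' {x}) := by
  have hdisc : ∀ s : Set ι, MeasurableSet s := fun s => s.toFinite.measurableSet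
  have hBmeas : MeasurableSet Bev := hBev ▸ hX (hdisc _)
  have hc0 : ENNReal.ofReal c ≠ 0 := by
    simpa using (ENNReal.ofReal_pos.mpr hc).ne'
  -- key pointwise identity
  have key : ∀ y, g y = b →
      P (Mev ∩ X ⁻¹' {y}) = ENNReal.ofReal c * P (X ⁻¹' {y}) := by
    intro y hy
    have h := hbal y hy
    rw [cond_apply (hX (hdisc _))] at h
    by_cases hy0 : P (X ⁻¹' {y}) = 0
    · have h1 : P (Mev ∩ X ⁻¹' {y}) = 0 :=
        measure_inter_null_of_null_right _ hy0
      rw [h1, hy0, mul_zero]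
    · have hfin : P (X ⁻¹' {y}) ≠ ⊤ := measure_ne_top P _
      have := congrArg (fun z => P (X ⁻¹' {y}) * z) h
      simp only [← mul_assoc, ENNReal.mul_inv_cancel hy0 hfin, one_mul] at this
      rw [Set.inter_comm] at this
      rw [this, mul_comm]
  -- sum over fiber
  have hBsum : P (Mev ∩ Bev) = ENNReal.ofReal c * P Bev := by
    classical
    set s : Finset ι := Finset.univ.filter (fun y => g y = b) with hs
    have hBeq : Bev = ⋃ y ∈ s, X ⁻¹' {y} := by
      rw [hBev]; ext ω; simp [hs]
    have hpd : (s : Set ι).PairwiseDisjoint (fun y => X ⁻¹' {y}) := by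
      intro a _ b' _ hab
      refine Set.disjoint_left.mpr ?_
      intro ω ha hb'
      exact hab (ha.symm.trans hb')
    have hpd2 : (s : Set ι).PairwiseDisjoint (fun y => Mev ∩ X ⁻¹' {y}) :=
      fun a ha b' hb' hab =>
        ((hpd ha hb' hab).mono Set.inter_subset_right Set.inter_subset_right)
    have h1 : P (Mev ∩ Bev) = ∑ y ∈ s, P (Mev ∩ X ⁻¹' {y}) := by
      rw [hBeq, Set.inter_iUnion₂]
      exact measure_biUnion_finset hpd2 (fun y _ => hMev.inter (hX (hdisc _)))
    have h2 : P Bev = ∑ y ∈ s, P (X ⁻¹' {y}) := by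
      rw [hBeq]
      exact measure_biUnion_finset hpd (fun y _ => hX (hdisc _))
    rw [h1, h2, Finset.mul_sum]
    refine Finset.sum_congr rfl fun y hy => ?_
    exact key y (by simpa [hs] using hy)
  intro x hx hpx
  have hsub : X ⁻¹' {x} ⊆ Bev := by
    rw [hBev]; intro ω hω; simp only [Set.mem_preimage, Set.mem_singleton_iff] at hω
    simp [hω, hx]
  rw [cond_apply (hMev.inter hBmeas), cond_apply hBmeas]
  have e1 : Mev ∩ Bev ∩ X ⁻¹' {x} = Mev ∩ X ⁻¹' {x} := by
    rw [Set.inter_assoc, Set.inter_eq_self_of_subset_right hsub]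
  have e2 : Bev ∩ X ⁻¹' {x} = X ⁻¹' {x} :=
    Set.inter_eq_self_of_subset_right hsub
  rw [e1, e2, hBsum, key x hx,
    ENNReal.mul_inv (Or.inl hc0) (Or.inl ENNReal.ofReal_ne_top)]
  rw [mul_comm (ENNReal.ofReal c)⁻¹ (P Bev)⁻¹, mul_assoc, ← mul_assoc (ENNReal.ofReal c)⁻¹,
    ENNReal.inv_mul_cancel hc0 ENNReal.ofReal_ne_top, one_mul]
end

section
/- Score-level ignorability from covariate-level ignorability (discrete case): in a discrete probability space with random variables Y, M, X and a function g of X, suppose (i) for each x, E[Y | M = m, X = x] = E[Y | X = x] (ignorability given X), and (ii) P(M = m | X = x) is constant over {x : g(x) = b}. Then E[Y | M = m, g(X) = b] = E[Y | g(X) = b]. -/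
open MeasureTheory ProbabilityTheory

theorem score_level_ignorability
    {Ω ι β : Type*} [MeasurableSpace Ω] [Fintype ι]
    [MeasurableSpace ι] [MeasurableSingletonClass ι]
    (P : Measure Ω) [IsProbabilityMeasure P]
    (Y : Ω → ℝ) (hY : Measurable Y) (hYint : Integrable Y P)
    (X : Ω → ι) (hX : Measurable X)
    (Mev : Set Ω) (hMev : MeasurableSet Mev)
    (g : ι → β) (b : β)
    (Bev : Set Ω) (hBev : Bev = X ⁻¹' {x | g x = b})
    (hBpos : P Bev ≠ 0) (hMBpos : P (Mev ∩ Bev) ≠ 0)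
    (hignor : ∀ x, P (Mev ∩ X ⁻¹' {x}) ≠ 0 →
      ∫ ω, Y ω ∂(P[|Mev ∩ X ⁻¹' {x}]) = ∫ ω, Y ω ∂(P[|X ⁻¹' {x}]))
    (c : ℝ) (hc : 0 < c)
    (hbal : ∀ x, g x = b → (P[|X ⁻¹' {x}]) Mev = ENNReal.ofReal c) :
    ∫ ω, Y ω ∂(P[|Mev ∩ Bev]) = ∫ ω, Y ω ∂(P[|Bev]) := by
  classical
  set S : Finset ι := Finset.univ.filter (fun x => g x = b) with hS
  have hfib_meas : ∀ x : ι, MeasurableSet (X ⁻¹' {x}) := fun x =>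
    hX (measurableSet_singleton x)
  have hfin : ∀ s : Set Ω, P s ≠ ⊤ := fun s => (measure_lt_top P s).ne
  have hcpos : (ENNReal.ofReal c) ≠ 0 := (ENNReal.ofReal_pos.mpr hc).ne'
  have hBevU : Bev = ⋃ x ∈ S, X ⁻¹' {x} := by
    rw [hBev]; ext ω; simp [hS]
  -- all fibers in S have positive measure
  have hfibpos : ∀ x ∈ S, P (X ⁻¹' {x}) ≠ 0 := by
    intro x hx h0
    have hb := hbal x (by simpa [hS] using hx)
    rw [cond_apply (hfib_meas x)] at hb
    have h1 : P (X ⁻¹' {x} ∩ Mev) = 0 :=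
      le_antisymm (h0 ▸ measure_mono Set.inter_subset_left) (zero_le)
    rw [h1, mul_zero] at hb
    exact hcpos hb.symm
  -- key relation on fibers
  have hM_fib : ∀ x ∈ S, P (Mev ∩ X ⁻¹' {x}) = ENNReal.ofReal c * P (X ⁻¹' {x}) := by
    intro x hx
    have hb := hbal x (by simpa [hS] using hx)
    rw [cond_apply (hfib_meas x)] at hb
    have := congrArg (fun z => P (X ⁻¹' {x}) * z) hb
    rw [← mul_assoc, ENNReal.mul_inv_cancel (hfibpos x hx) (hfin _), one_mul] at this
    rw [Set.inter_comm] at this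
    rw [this, mul_comm]
  have hMfibpos : ∀ x ∈ S, P (Mev ∩ X ⁻¹' {x}) ≠ 0 := by
    intro x hx
    rw [hM_fib x hx]
    exact mul_ne_zero hcpos (hfibpos x hx)
  -- conditional integral formula
  have hcond_int : ∀ s : Set Ω, ∫ ω, Y ω ∂(P[|s]) = (P s).toReal⁻¹ * ∫ ω in s, Y ω ∂P := by
    intro s
    rw [ProbabilityTheory.cond, integral_smul_measure, smul_eq_mul, ENNReal.toReal_inv]
  -- integral over each intersected fiber
  have hint_fib : ∀ x ∈ S,
      ∫ ω in Mev ∩ X ⁻¹' {x}, Y ω ∂P = c * ∫ ω in X ⁻¹' {x}, Y ω ∂P := by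
    intro x hx
    have h1 := hignor x (hMfibpos x hx)
    rw [hcond_int, hcond_int] at h1
    have hMt : (P (Mev ∩ X ⁻¹' {x})).toReal ≠ 0 :=
      ENNReal.toReal_ne_zero.mpr ⟨hMfibpos x hx, hfin _⟩
    have hft : (P (X ⁻¹' {x})).toReal ≠ 0 :=
      ENNReal.toReal_ne_zero.mpr ⟨hfibpos x hx, hfin _⟩
    have h2 : ∫ ω in Mev ∩ X ⁻¹' {x}, Y ω ∂P
        = (P (Mev ∩ X ⁻¹' {x})).toReal * ((P (X ⁻¹' {x})).toReal⁻¹ * ∫ ω in X ⁻¹' {x}, Y ω ∂P) := by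
      rw [← h1]; field_simp
    rw [h2, hM_fib x hx, ENNReal.toReal_mul, ENNReal.toReal_ofReal hc.le]
    field_simp
  -- disjointness
  have hdisj : Set.Pairwise (↑S) (Function.onFun Disjoint fun x => X ⁻¹' ({x} : Set ι)) := by
    intro x _ y _ hxy
    exact Set.disjoint_left.mpr (fun ω h1 h2 => hxy (by simp at h1 h2; rw [← h1, ← h2]))
  have hdisj2 : Set.Pairwise (↑S) (Function.onFun Disjoint fun x => Mev ∩ X ⁻¹' ({x} : Set ι)) := by
    intro x hx y hy hxy
    exact Set.disjoint_of_subset Set.inter_subset_right Set.inter_subset_right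
      (hdisj hx hy hxy)
  have hMBU : Mev ∩ Bev = ⋃ x ∈ S, Mev ∩ X ⁻¹' {x} := by
    rw [hBevU, Set.inter_iUnion₂]
  -- measure identities
  have hPMB : P (Mev ∩ Bev) = ENNReal.ofReal c * P Bev := by
    rw [hMBU, measure_biUnion_finset hdisj2 (fun x _ => hMev.inter (hfib_meas x)),
      hBevU, measure_biUnion_finset hdisj (fun x _ => hfib_meas x), Finset.mul_sum]
    exact Finset.sum_congr rfl hM_fib
  -- integral identities
  have hIB : ∫ ω in Mev ∩ Bev, Y ω ∂P = c * ∫ ω in Bev, Y ω ∂P := by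
    rw [hMBU, integral_biUnion_finset S (fun x _ => hMev.inter (hfib_meas x)) hdisj2
        (fun x _ => hYint.integrableOn),
      hBevU, integral_biUnion_finset S (fun x _ => hfib_meas x) hdisj
        (fun x _ => hYint.integrableOn), Finset.mul_sum]
    exact Finset.sum_congr rfl hint_fib
  rw [hcond_int, hcond_int, hPMB, hIB, ENNReal.toReal_mul, ENNReal.toReal_ofReal hc.le]
  have hBt : (P Bev).toReal ≠ 0 := ENNReal.toReal_ne_zero.mpr ⟨hBpos, hfin _⟩
  field_simp
end

section
/- Projection identity for the confounding function (discrete case): under the balancing condition that P(M = m | X = x) is constant on {x : g(x) = b}, define Δ*(x) = E[Y | M = m, X = x] − E[Y | X = x] and Δ(b) = E[Y | M = m, g(X) = b] − E[Y | g(X) = b]. Then Δ(b) = E[Δ*(X) | g(X) = b]. -/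
open MeasureTheory ProbabilityTheory

theorem projection_of_confounding_function
    {Ω ι β : Type*} [MeasurableSpace Ω] [Fintype ι]
    [MeasurableSpace ι] [MeasurableSingletonClass ι]
    (P : Measure Ω) [IsProbabilityMeasure P]
    (Y : Ω → ℝ) (hY : Measurable Y) (hYint : Integrable Y P)
    (X : Ω → ι) (hX : Measurable X)
    (Mev : Set Ω) (hMev : MeasurableSet Mev)
    (g : ι → β) (b : β)
    (Bev : Set Ω) (hBev : Bev = X ⁻¹' {x | g x = b})
    (hBpos : P Bev ≠ 0) (hMBpos : P (Mev ∩ Bev) ≠ 0)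
    (hpos : ∀ x, g x = b → P (Mev ∩ X ⁻¹' {x}) ≠ 0)
    (c : ℝ) (hc : 0 < c)
    (hbal : ∀ x, g x = b → (P[|X ⁻¹' {x}]) Mev = ENNReal.ofReal c)
    (Δstar : ι → ℝ)
    (hΔstar : ∀ x, g x = b → Δstar x =
      ∫ ω, Y ω ∂(P[|Mev ∩ X ⁻¹' {x}]) - ∫ ω, Y ω ∂(P[|X ⁻¹' {x}])) :
    ∫ ω, Y ω ∂(P[|Mev ∩ Bev]) - ∫ ω, Y ω ∂(P[|Bev])
      = ∫ ω, Δstar (X ω) ∂(P[|Bev]) := by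
  classical
  subst hBev
  set B : Set Ω := X ⁻¹' {x | g x = b} with hB
  set S : Finset ι := Finset.univ.filter (fun x => g x = b) with hS
  have hmemS : ∀ x : ι, x ∈ S ↔ g x = b := by
    intro x; simp [hS]
  -- measurability of fibers
  have hmx : ∀ x : ι, MeasurableSet (X ⁻¹' {x}) :=
    fun x => hX (measurableSet_singleton x)
  have hmB : MeasurableSet B := hX ((Set.toFinite _).measurableSet)
  -- decomposition of B
  have hBU : B = ⋃ x ∈ S, X ⁻¹' {x} := by
    ext ω
    simp only [Set.mem_iUnion, Set.mem_preimage, Set.mem_singleton_iff, hmemS, hB,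
      Set.mem_setOf_eq]
    exact ⟨fun h => ⟨X ω, h, rfl⟩, fun ⟨x, hx, hxe⟩ => hxe ▸ hx⟩
  have hMBU : Mev ∩ B = ⋃ x ∈ S, Mev ∩ X ⁻¹' {x} := by
    rw [hBU, Set.inter_iUnion₂]
  -- pairwise disjointness
  have hdisj : Set.Pairwise (↑S) (Function.onFun Disjoint fun x => X ⁻¹' {x}) := by
    intro x _ y _ hxy
    exact Set.disjoint_left.2 (fun ω h1 h2 => hxy (h1.symm.trans h2))
  have hdisjM : Set.Pairwise (↑S) (Function.onFun Disjoint fun x => Mev ∩ X ⁻¹' {x}) := by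
    intro x hx y hy hxy
    exact ((hdisj hx hy hxy).mono Set.inter_subset_right Set.inter_subset_right)
  -- measure abbreviations
  have hfin : ∀ s : Set Ω, P s ≠ ⊤ := fun s => measure_ne_top P s
  have hxpos : ∀ x, g x = b → P (X ⁻¹' {x}) ≠ 0 := by
    intro x hx h0
    exact hpos x hx (measure_mono_null Set.inter_subset_right h0)
  -- balancing gives P (Mev ∩ X⁻¹{x}) = ofReal c * P (X⁻¹{x})
  have hkey : ∀ x, g x = b →
      P (Mev ∩ X ⁻¹' {x}) = ENNReal.ofReal c * P (X ⁻¹' {x}) := by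
    intro x hx
    have h := hbal x hx
    rw [cond_apply (hmx x)] at h
    have := congrArg (fun t => t * P (X ⁻¹' {x})) h
    rwa [mul_comm (P (X ⁻¹' {x}))⁻¹, mul_assoc,
      ENNReal.inv_mul_cancel (hxpos x hx) (hfin _), mul_one, Set.inter_comm] at this
  -- real-valued measures
  have hPB : P B = ∑ x ∈ S, P (X ⁻¹' {x}) := by
    rw [hBU, measure_biUnion_finset hdisj (fun x _ => hmx x)]
  have hPMB : P (Mev ∩ B) = ENNReal.ofReal c * P B := by
    rw [hMBU, measure_biUnion_finset hdisjM (fun x _ => (hMev.inter (hmx x))), hPB,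
      Finset.mul_sum]
    exact Finset.sum_congr rfl (fun x hx => hkey x ((hmemS x).1 hx))
  -- toReal facts
  have hpBpos : 0 < (P B).toReal := ENNReal.toReal_pos hBpos (hfin _)
  have hpMB : (P (Mev ∩ B)).toReal = c * (P B).toReal := by
    rw [hPMB, ENNReal.toReal_mul, ENNReal.toReal_ofReal hc.le]
  have hpxkey : ∀ x, g x = b →
      (P (Mev ∩ X ⁻¹' {x})).toReal = c * (P (X ⁻¹' {x})).toReal := by
    intro x hx
    rw [hkey x hx, ENNReal.toReal_mul, ENNReal.toReal_ofReal hc.le]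
  have hpxpos : ∀ x, g x = b → 0 < (P (X ⁻¹' {x})).toReal := by
    intro x hx; exact ENNReal.toReal_pos (hxpos x hx) (hfin _)
  -- conditional integral formula
  have hci : ∀ (f : Ω → ℝ) (s : Set Ω),
      ∫ ω, f ω ∂(P[|s]) = (P s).toReal⁻¹ * ∫ ω in s, f ω ∂P := by
    intro f s
    rw [ProbabilityTheory.cond, integral_smul_measure, ENNReal.toReal_inv, smul_eq_mul]
  -- integrability
  have hintY : ∀ s : Set Ω, IntegrableOn Y s P := fun s => hYint.integrableOn
  have hintD : Integrable (fun ω => Δstar (X ω)) P := by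
    have hm : Measurable fun ω => Δstar (X ω) :=
      (measurable_of_countable Δstar).comp hX
    refine Integrable.mono' (integrable_const (∑ x : ι, ‖Δstar x‖))
      hm.aestronglyMeasurable (Filter.Eventually.of_forall fun ω => ?_)
    exact Finset.single_le_sum (f := fun x => ‖Δstar x‖)
      (fun x _ => norm_nonneg _) (Finset.mem_univ (X ω))
  -- split integrals
  have hIB : ∫ ω in B, Y ω ∂P = ∑ x ∈ S, ∫ ω in X ⁻¹' {x}, Y ω ∂P := by
    rw [hBU]
    exact integral_biUnion_finset S (fun x _ => hmx x) hdisj (fun x _ => hintY _)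
  have hIMB : ∫ ω in Mev ∩ B, Y ω ∂P = ∑ x ∈ S, ∫ ω in Mev ∩ X ⁻¹' {x}, Y ω ∂P := by
    rw [hMBU]
    exact integral_biUnion_finset S (fun x _ => (hMev.inter (hmx x))) hdisjM
      (fun x _ => hintY _)
  have hID : ∫ ω in B, Δstar (X ω) ∂P
      = ∑ x ∈ S, Δstar x * (P (X ⁻¹' {x})).toReal := by
    rw [hBU, integral_biUnion_finset S (fun x _ => hmx x) hdisj
      (fun x _ => hintD.integrableOn)]
    refine Finset.sum_congr rfl (fun x hx => ?_)
    rw [setIntegral_congr_fun (hmx x) (g := fun _ => Δstar x)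
      (fun ω hω => by simp [Set.mem_preimage, Set.mem_singleton_iff] at hω; rw [hω]),
      setIntegral_const, smul_eq_mul, mul_comm, measureReal_def]
  -- final computation
  rw [hci, hci, hci, hIB, hIMB, hID, hpMB]
  have hterm : ∀ x ∈ S, Δstar x * (P (X ⁻¹' {x})).toReal
      = c⁻¹ * ∫ ω in Mev ∩ X ⁻¹' {x}, Y ω ∂P - ∫ ω in X ⁻¹' {x}, Y ω ∂P := by
    intro x hxS
    have hx := (hmemS x).1 hxS
    rw [hΔstar x hx, hci, hci, hpxkey x hx]
    have h1 := (hpxpos x hx).ne'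
    field_simp
  rw [Finset.sum_congr rfl hterm, Finset.sum_sub_distrib, ← Finset.mul_sum]
  field_simp
end
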